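/- Let $f: \mathbb{R} \to \mathbb{C}$ be a Schwartz function, and define $g(y) = |y|^{-1} f(y^{-1})$ for $y \neq 0$. If $f$ vanishes to infinite order at $0$ (all derivatives vanish at $0$), then $g$ extends to a Schwartz function on $\mathbb{R}$ (setting $g(0) = 0$). -/

import Mathlib

open Finset Complex

/-- The canonical form of the `n`-th derivative of `|x|⁻¹ f(x⁻¹)`:
`sign x * ∑ k ≤ n, c k * f^(k)(x⁻¹) * x⁻¹ ^ (n+1+k)`. -/
noncomputable def EIAux (F : ℝ → ℂ) (c : ℕ → ℤ) (n : ℕ) (x : ℝ) : ℂ :=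
  (Real.sign x : ℂ) * ∑ k ∈ Finset.range (n + 1),
    (c k : ℂ) * iteratedDeriv k F x⁻¹ * ((x : ℂ))⁻¹ ^ (n + 1 + k)

/-- Coefficient recursion when differentiating the canonical form. -/
def succC (c : ℕ → ℤ) (n : ℕ) : ℕ → ℤ := fun k =>
  (if k = 0 then 0 else -c (k - 1)) + (if k ≤ n then -((n + 1 + k : ℕ) : ℤ) * c k else 0)

lemma EIAux_zero (F : ℝ → ℂ) (c : ℕ → ℤ) (n : ℕ) : EIAux F c n 0 = 0 := by
  simp [EIAux, Real.sign_zero]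

lemma norm_EIAux_le (F : ℝ → ℂ) (c : ℕ → ℤ) (n : ℕ) (x : ℝ) :
    ‖EIAux F c n x‖ ≤ ∑ k ∈ Finset.range (n + 1),
      |(c k : ℝ)| * (‖iteratedDeriv k F x⁻¹‖ * |x⁻¹| ^ (n + 1 + k)) := by
  have h1 : ‖((Real.sign x : ℝ) : ℂ)‖ ≤ 1 := by
    rw [Complex.norm_real, Real.norm_eq_abs]
    rcases lt_trichotomy x 0 with h | rfl | h
    · simp [Real.sign_of_neg h]
    · simp [Real.sign_zero]
    · simp [Real.sign_of_pos h]
  rw [EIAux, norm_mul]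
  calc ‖((Real.sign x : ℝ) : ℂ)‖ * ‖∑ k ∈ Finset.range (n + 1),
        (c k : ℂ) * iteratedDeriv k F x⁻¹ * ((x : ℂ))⁻¹ ^ (n + 1 + k)‖
      ≤ 1 * ‖∑ k ∈ Finset.range (n + 1),
        (c k : ℂ) * iteratedDeriv k F x⁻¹ * ((x : ℂ))⁻¹ ^ (n + 1 + k)‖ :=
        mul_le_mul_of_nonneg_right h1 (norm_nonneg _)
    _ = ‖∑ k ∈ Finset.range (n + 1),
        (c k : ℂ) * iteratedDeriv k F x⁻¹ * ((x : ℂ))⁻¹ ^ (n + 1 + k)‖ := one_mul _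
    _ ≤ ∑ k ∈ Finset.range (n + 1),
        ‖(c k : ℂ) * iteratedDeriv k F x⁻¹ * ((x : ℂ))⁻¹ ^ (n + 1 + k)‖ := norm_sum_le _ _
    _ ≤ ∑ k ∈ Finset.range (n + 1),
        |(c k : ℝ)| * (‖iteratedDeriv k F x⁻¹‖ * |x⁻¹| ^ (n + 1 + k)) := by
        refine Finset.sum_le_sum fun k _ => le_of_eq ?_
        rw [norm_mul, norm_mul, norm_pow, norm_inv, Complex.norm_real, Complex.norm_intCast,
          Real.norm_eq_abs, mul_assoc, abs_inv]

lemma hasDerivAt_iteratedDeriv {F : ℝ → ℂ} (hF : ContDiff ℝ (⊤:ℕ∞) F) (k : ℕ) (u : ℝ) :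
    HasDerivAt (iteratedDeriv k F) (iteratedDeriv (k + 1) F u) u := by
  have h1 : Differentiable ℝ (iteratedDeriv k F) :=
    hF.differentiable_iteratedDeriv k (by exact_mod_cast Ne.lt_top (ENat.coe_ne_top k))
  have h2 := (h1 u).hasDerivAt
  rwa [← iteratedDeriv_succ] at h2

lemma EIAux_hasDerivAt {F : ℝ → ℂ} (hF : ContDiff ℝ (⊤:ℕ∞) F) (c : ℕ → ℤ) (n : ℕ)
    {x : ℝ} (hx : x ≠ 0) :
    HasDerivAt (EIAux F c n) (EIAux F (succC c n) (n + 1) x) x := by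
  have hxC : (x : ℂ) ≠ 0 := Complex.ofReal_ne_zero.mpr hx
  set v : ℂ := ((x : ℂ))⁻¹ with hv
  set G : ℕ → ℂ := fun j => iteratedDeriv j F x⁻¹ * v ^ (n + 2 + j) with hG
  set S : ℝ → ℂ := fun y => ∑ k ∈ Finset.range (n + 1),
    (c k : ℂ) * iteratedDeriv k F y⁻¹ * ((y : ℂ))⁻¹ ^ (n + 1 + k) with hSdef
  -- derivative of S
  have hS : HasDerivAt S (∑ k ∈ Finset.range (n + 1),
      ((-(c k : ℂ)) * G (k + 1) + (-((n + 1 + k : ℕ) : ℂ)) * (c k : ℂ) * G k)) x := by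
    apply HasDerivAt.fun_sum
    intro k hk
    have hA : HasDerivAt (fun y : ℝ => iteratedDeriv k F y⁻¹)
        ((-(x ^ 2)⁻¹ : ℝ) • iteratedDeriv (k + 1) F x⁻¹) x := by
      exact (hasDerivAt_iteratedDeriv hF k x⁻¹).scomp x (hasDerivAt_inv hx)
    have hBr : HasDerivAt (fun y : ℝ => (y⁻¹) ^ (n + 1 + k))
        (((n + 1 + k : ℕ) : ℝ) * (x⁻¹) ^ (n + 1 + k - 1) * (-(x ^ 2)⁻¹)) x :=
      (hasDerivAt_inv hx).pow _
    have hB : HasDerivAt (fun y : ℝ => ((y : ℂ))⁻¹ ^ (n + 1 + k))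
        (((((n + 1 + k : ℕ) : ℝ) * (x⁻¹) ^ (n + 1 + k - 1) * (-(x ^ 2)⁻¹) : ℝ)) : ℂ) x := by
      have heq : (fun y : ℝ => ((y : ℂ))⁻¹ ^ (n + 1 + k)) =
          fun y : ℝ => (((y⁻¹ ^ (n + 1 + k) : ℝ)) : ℂ) := by
        funext y; push_cast; ring
      rw [heq]
      exact hBr.ofReal_comp
    have hprod := (HasDerivAt.const_mul ((c k : ℂ)) hA).mul hB
    refine HasDerivAt.congr_deriv hprod ?_
    have hsub : n + 1 + k - 1 = n + k := by omega
    rw [hsub]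
    rw [Complex.real_smul]
    push_cast
    have hv2 : ((x : ℂ) ^ 2)⁻¹ = v ^ 2 := by rw [hv, inv_pow]
    rw [hG]
    simp only [hv2, hv]
    ring
  -- rewrite the derivative value as the canonical sum
  have hsum : (∑ k ∈ Finset.range (n + 1),
      ((-(c k : ℂ)) * G (k + 1) + (-((n + 1 + k : ℕ) : ℂ)) * (c k : ℂ) * G k)) =
      ∑ j ∈ Finset.range (n + 2), (succC c n j : ℂ) * G j := by
    rw [Finset.sum_add_distrib]
    have h1 : (∑ k ∈ Finset.range (n + 1), (-(c k : ℂ)) * G (k + 1)) =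
        ∑ j ∈ Finset.range (n + 2),
          ((if j = 0 then (0 : ℤ) else -c (j - 1)) : ℂ) * G j := by
      conv_rhs => rw [Finset.sum_range_succ']
      simp
    have h2 : (∑ k ∈ Finset.range (n + 1), (-((n + 1 + k : ℕ) : ℂ)) * (c k : ℂ) * G k) =
        ∑ j ∈ Finset.range (n + 2),
          ((if j ≤ n then -((n + 1 + j : ℕ) : ℤ) * c j else 0) : ℂ) * G j := by
      conv_rhs => rw [Finset.sum_range_succ]
      rw [if_neg (by omega : ¬ n + 1 ≤ n)]
      simp only [Int.cast_zero, zero_mul, add_zero]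
      refine Finset.sum_congr rfl fun j hj => ?_
      rw [if_pos (by exact Nat.lt_succ_iff.mp (Finset.mem_range.mp hj))]
      push_cast
      ring
    rw [h1, h2, ← Finset.sum_add_distrib]
    refine Finset.sum_congr rfl fun j _ => ?_
    rw [succC]
    push_cast
    ring
  rw [hsum] at hS
  -- multiply by the (locally constant) sign
  have hsign : HasDerivAt (fun y : ℝ => ((Real.sign x : ℝ) : ℂ) * S y)
      (((Real.sign x : ℝ) : ℂ) * ∑ j ∈ Finset.range (n + 2), (succC c n j : ℂ) * G j) x :=
    HasDerivAt.const_mul _ hS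
  have hfinal : EIAux F (succC c n) (n + 1) x =
      ((Real.sign x : ℝ) : ℂ) * ∑ j ∈ Finset.range (n + 2), (succC c n j : ℂ) * G j := by
    rw [EIAux, hG]
    congr 1
    refine Finset.sum_congr (by norm_num) fun j _ => ?_
    rw [hv]
    ring_nf
  rw [hfinal]
  refine hsign.congr_of_eventuallyEq ?_
  rcases hx.lt_or_gt with h | h
  · filter_upwards [isOpen_Iio.eventually_mem (show x ∈ Set.Iio (0:ℝ) from h)] with y hy
    rw [EIAux, Real.sign_of_neg hy, Real.sign_of_neg h]
  · filter_upwards [isOpen_Ioi.eventually_mem (show x ∈ Set.Ioi (0:ℝ) from h)] with y hy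
    rw [EIAux, Real.sign_of_pos hy, Real.sign_of_pos h]

lemma decayA (f : SchwartzMap ℝ ℂ) (k p : ℕ) :
    ∃ C, 0 ≤ C ∧ ∀ u : ℝ, ‖iteratedDeriv k (⇑f) u‖ * |u| ^ p ≤ C := by
  obtain ⟨C, hC0, hC⟩ := f.decay p k
  refine ⟨C, hC0.le, fun u => ?_⟩
  have := hC u
  rw [norm_iteratedFDeriv_eq_norm_iteratedDeriv, Real.norm_eq_abs] at this
  linarith [this]

lemma decayB (f : SchwartzMap ℝ ℂ) (hf : ∀ n : ℕ, iteratedDeriv n (fun x => f x) 0 = 0)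
    (p : ℕ) : ∀ k : ℕ, ∃ C, 0 ≤ C ∧ ∀ u : ℝ, ‖iteratedDeriv k (⇑f) u‖ ≤ C * |u| ^ p := by
  induction p with
  | zero =>
    intro k
    obtain ⟨C, hC0, hC⟩ := decayA f k 0
    exact ⟨C, hC0, fun u => by simpa using hC u⟩
  | succ p ih =>
    intro k
    obtain ⟨C, hC0, hC⟩ := ih (k + 1)
    refine ⟨C, hC0, fun u => ?_⟩
    have h0 : iteratedDeriv k (⇑f) 0 = 0 := hf k
    have key : ‖iteratedDeriv k (⇑f) u - iteratedDeriv k (⇑f) 0‖ ≤ (C * |u| ^ p) * ‖u - 0‖ := by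
      apply Convex.norm_image_sub_le_of_norm_hasDerivWithin_le
        (f' := iteratedDeriv (k + 1) (⇑f)) ?_ ?_ (convex_closedBall (0 : ℝ) |u|) ?_ ?_
      · intro t _
        exact (hasDerivAt_iteratedDeriv (f.smooth ⊤) k t).hasDerivWithinAt
      · intro t ht
        have htu : |t| ≤ |u| := by
          simpa [Real.dist_eq] using Metric.mem_closedBall.mp ht
        calc ‖iteratedDeriv (k + 1) (⇑f) t‖ ≤ C * |t| ^ p := hC t
          _ ≤ C * |u| ^ p := by gcongr
      · simp [Metric.mem_closedBall]
      · simp [Metric.mem_closedBall, Real.dist_eq]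
    rw [h0, sub_zero, sub_zero, Real.norm_eq_abs] at key
    calc ‖iteratedDeriv k (⇑f) u‖ ≤ C * |u| ^ p * |u| := key
      _ = C * |u| ^ (p + 1) := by rw [pow_succ, mul_assoc]

lemma EIAux_bound_sq (f : SchwartzMap ℝ ℂ) (c : ℕ → ℤ) (n : ℕ) :
    ∃ K, 0 ≤ K ∧ ∀ x : ℝ, ‖EIAux (⇑f) c n x‖ ≤ K * x ^ 2 := by
  choose C hC0 hC using decayA f
  refine ⟨∑ k ∈ Finset.range (n + 1), |(c k : ℝ)| * C k (n + 3 + k), ?_, ?_⟩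
  · apply Finset.sum_nonneg
    intro k _
    exact mul_nonneg (abs_nonneg _) (hC0 k _)
  intro x
  rcases eq_or_ne x 0 with rfl | hx
  · simp [EIAux_zero]
  calc ‖EIAux (⇑f) c n x‖
      ≤ ∑ k ∈ Finset.range (n + 1),
        |(c k : ℝ)| * (‖iteratedDeriv k (⇑f) x⁻¹‖ * |x⁻¹| ^ (n + 1 + k)) :=
        norm_EIAux_le _ _ _ _
    _ ≤ ∑ k ∈ Finset.range (n + 1), |(c k : ℝ)| * (C k (n + 3 + k) * x ^ 2) := by
        refine Finset.sum_le_sum fun k _ => ?_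
        refine mul_le_mul_of_nonneg_left ?_ (abs_nonneg _)
        have hpow : |x⁻¹| ^ (n + 1 + k) = |x⁻¹| ^ (n + 3 + k) * x ^ 2 := by
          rw [show n + 3 + k = (n + 1 + k) + 2 by ring]
          have h2 : |x⁻¹| ^ 2 * x ^ 2 = 1 := by
            rw [_root_.sq_abs]
            field_simp
          conv_rhs => rw [pow_add]
          rw [mul_assoc, h2, mul_one]
        rw [hpow, ← mul_assoc]
        exact mul_le_mul_of_nonneg_right (hC k (n + 3 + k) x⁻¹) (sq_nonneg x)
    _ = (∑ k ∈ Finset.range (n + 1), |(c k : ℝ)| * C k (n + 3 + k)) * x ^ 2 := by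
        rw [Finset.sum_mul]
        exact Finset.sum_congr rfl fun k _ => by ring

lemma EIAux_hasDerivAt_zero (f : SchwartzMap ℝ ℂ) (c : ℕ → ℤ) (n : ℕ) :
    HasDerivAt (EIAux (⇑f) c n) 0 0 := by
  obtain ⟨K, hK0, hK⟩ := EIAux_bound_sq f c n
  rw [hasDerivAt_iff_tendsto]
  simp only [sub_zero, smul_zero, EIAux_zero]
  have hb : ∀ t : ℝ, ‖t‖⁻¹ * ‖EIAux (⇑f) c n t‖ ≤ K * |t| := by
    intro t
    rcases eq_or_ne t 0 with rfl | ht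
    · simp [EIAux_zero]
    · rw [Real.norm_eq_abs]
      have h1 : ‖EIAux (⇑f) c n t‖ ≤ K * t ^ 2 := hK t
      have h2 : |t|⁻¹ * ‖EIAux (⇑f) c n t‖ ≤ |t|⁻¹ * (K * t ^ 2) :=
        mul_le_mul_of_nonneg_left h1 (by positivity)
      have h3 : |t|⁻¹ * (K * t ^ 2) = K * |t| := by
        have : t ^ 2 = |t| ^ 2 := (_root_.sq_abs t).symm
        rw [this]
        have hat : |t| ≠ 0 := abs_ne_zero.mpr ht
        field_simp
      linarith
  have hK2 : Filter.Tendsto (fun t : ℝ => K * |t|) (nhds 0) (nhds 0) := by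
    have := ((_root_.continuous_abs).tendsto (0 : ℝ)).const_mul K
    simpa using this
  exact squeeze_zero (fun t => by positivity) hb hK2

lemma EIAux_hasDerivAt_all (f : SchwartzMap ℝ ℂ) (c : ℕ → ℤ) (n : ℕ) (x : ℝ) :
    HasDerivAt (EIAux (⇑f) c n) (EIAux (⇑f) (succC c n) (n + 1) x) x := by
  rcases eq_or_ne x 0 with rfl | hx
  · rw [EIAux_zero]; exact EIAux_hasDerivAt_zero f c n
  · exact EIAux_hasDerivAt (f.smooth ⊤) c n hx

lemma iteratedDeriv_EIAux_rep (f : SchwartzMap ℝ ℂ) (n : ℕ) :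
    ∃ c : ℕ → ℤ, iteratedDeriv n (EIAux (⇑f) (fun _ => 1) 0) = EIAux (⇑f) c n := by
  induction n with
  | zero => exact ⟨fun _ => 1, by simp [iteratedDeriv_zero]⟩
  | succ n ih =>
    obtain ⟨c, hc⟩ := ih
    refine ⟨succC c n, ?_⟩
    rw [iteratedDeriv_succ, hc]
    funext x
    exact (EIAux_hasDerivAt_all f c n x).deriv

lemma EIAux_schwartz_decay (f : SchwartzMap ℝ ℂ)
    (hf : ∀ n : ℕ, iteratedDeriv n (fun x => f x) 0 = 0) (c : ℕ → ℤ) (n k : ℕ) :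
    ∃ C, ∀ x : ℝ, ‖x‖ ^ k * ‖EIAux (⇑f) c n x‖ ≤ C := by
  choose C1 hC10 hC1 using decayA f
  choose C2 hC20 hC2 using decayB f hf k
  refine ⟨∑ j ∈ Finset.range (n + 1),
    |(c j : ℝ)| * max (C1 j (n + 1 + j)) (C2 j), fun x => ?_⟩
  have key : ∀ j : ℕ, |x| ^ k * (‖iteratedDeriv j (⇑f) x⁻¹‖ * |x⁻¹| ^ (n + 1 + j)) ≤
      max (C1 j (n + 1 + j)) (C2 j) := by
    intro j
    rcases le_or_gt |x| 1 with h | h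
    · have h1 : |x| ^ k ≤ 1 := pow_le_one₀ (abs_nonneg x) h
      have h2 : ‖iteratedDeriv j (⇑f) x⁻¹‖ * |x⁻¹| ^ (n + 1 + j) ≤ C1 j (n + 1 + j) :=
        hC1 j (n + 1 + j) x⁻¹
      have h3 : |x| ^ k * (‖iteratedDeriv j (⇑f) x⁻¹‖ * |x⁻¹| ^ (n + 1 + j)) ≤
          1 * C1 j (n + 1 + j) :=
        mul_le_mul h1 h2 (by positivity) zero_le_one
      rw [one_mul] at h3
      exact h3.trans (le_max_left _ _)
    · have hx : x ≠ 0 := by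
        intro h0
        rw [h0, abs_zero] at h
        linarith
      have hxinv : |x| * |x⁻¹| = 1 := by
        rw [abs_inv]
        exact mul_inv_cancel₀ (abs_ne_zero.mpr hx)
      have hinv : |x⁻¹| ≤ 1 := by
        rw [abs_inv]
        exact inv_le_one_of_one_le₀ h.le
      have h2 : ‖iteratedDeriv j (⇑f) x⁻¹‖ ≤ C2 j * |x⁻¹| ^ k := hC2 j x⁻¹
      calc |x| ^ k * (‖iteratedDeriv j (⇑f) x⁻¹‖ * |x⁻¹| ^ (n + 1 + j))
          ≤ |x| ^ k * ((C2 j * |x⁻¹| ^ k) * |x⁻¹| ^ (n + 1 + j)) := by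
            refine mul_le_mul_of_nonneg_left ?_ (by positivity)
            exact mul_le_mul_of_nonneg_right h2 (by positivity)
        _ = C2 j * ((|x| * |x⁻¹|) ^ k * |x⁻¹| ^ (n + 1 + j)) := by
            rw [mul_pow]; ring
        _ = C2 j * |x⁻¹| ^ (n + 1 + j) := by rw [hxinv, one_pow, one_mul]
        _ ≤ C2 j * 1 :=
            mul_le_mul_of_nonneg_left (pow_le_one₀ (abs_nonneg _) hinv) (hC20 j)
        _ = C2 j := mul_one _
        _ ≤ max (C1 j (n + 1 + j)) (C2 j) := le_max_right _ _
  calc ‖x‖ ^ k * ‖EIAux (⇑f) c n x‖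
      ≤ |x| ^ k * ∑ j ∈ Finset.range (n + 1),
        |(c j : ℝ)| * (‖iteratedDeriv j (⇑f) x⁻¹‖ * |x⁻¹| ^ (n + 1 + j)) := by
        rw [Real.norm_eq_abs]
        exact mul_le_mul_of_nonneg_left (norm_EIAux_le _ _ _ _) (by positivity)
    _ = ∑ j ∈ Finset.range (n + 1),
        |(c j : ℝ)| * (|x| ^ k * (‖iteratedDeriv j (⇑f) x⁻¹‖ * |x⁻¹| ^ (n + 1 + j))) := by
        rw [Finset.mul_sum]
        exact Finset.sum_congr rfl fun j _ => by ring
    _ ≤ ∑ j ∈ Finset.range (n + 1), |(c j : ℝ)| * max (C1 j (n + 1 + j)) (C2 j) :=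
        Finset.sum_le_sum fun j _ =>
          mul_le_mul_of_nonneg_left (key j) (abs_nonneg _)

/-- If `f` is a Schwartz function on `ℝ` vanishing to infinite order at `0`, then
`g(y) = |y|⁻¹ f(y⁻¹)` (with `g(0) = 0`) extends to a Schwartz function on `ℝ`. -/
theorem inversion_preserves_schwartz (f : SchwartzMap ℝ ℂ)
    (hf : ∀ n : ℕ, iteratedDeriv n (fun x => f x) 0 = 0) :
    ∃ g : SchwartzMap ℝ ℂ, g 0 = 0 ∧
      ∀ y : ℝ, y ≠ 0 → g y = (|y|⁻¹ : ℝ) • f y⁻¹ := by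
  have smooth : ContDiff ℝ ((⊤:ℕ∞):WithTop ℕ∞) (EIAux (⇑f) (fun _ => 1) 0) := by
    apply contDiff_of_differentiable_iteratedDeriv
    intro m _
    obtain ⟨c, hc⟩ := iteratedDeriv_EIAux_rep f m
    rw [hc]
    exact fun x => (EIAux_hasDerivAt_all f c m x).differentiableAt
  refine ⟨⟨EIAux (⇑f) (fun _ => 1) 0, smooth, ?_⟩, ?_, ?_⟩
  · intro k m
    obtain ⟨c, hc⟩ := iteratedDeriv_EIAux_rep f m
    obtain ⟨C, hC⟩ := EIAux_schwartz_decay f hf c m k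
    refine ⟨C, fun x => ?_⟩
    rw [norm_iteratedFDeriv_eq_norm_iteratedDeriv, hc]
    exact hC x
  · exact EIAux_zero _ _ _
  · intro y hy
    show EIAux (⇑f) (fun _ => 1) 0 y = _
    simp only [EIAux, Finset.sum_range_one, iteratedDeriv_zero, Int.cast_one, one_mul,
      Nat.add_zero, Nat.zero_add, pow_one, Complex.real_smul]
    have hsgn : ((Real.sign y : ℝ) : ℂ) * ((y : ℂ))⁻¹ = ((|y|⁻¹ : ℝ) : ℂ) := by
      rcases hy.lt_or_gt with h | h
      · rw [Real.sign_of_neg h, abs_of_neg h]; push_cast; ring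
      · rw [Real.sign_of_pos h, abs_of_pos h]; push_cast; ring
    rw [← hsgn]; ring
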